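/- Let X̃ be a real n×m matrix with n ≥ 1, let λ > 0, let s₁,…,s_m be the eigenvalues of X̃ᵀX̃ (counted with multiplicity), and let s̄ := tr(X̃ᵀX̃)/(n·m) be the mean of the eigenvalues of X̃ᵀX̃/n. Then the effective dimension ρ := Σ_{i=1}^m s_i/(s_i + λ) satisfies ρ ≤ m·s̄/(s̄ + λ/n). -/

import Mathlib

open Matrix

/-- Trace of a real symmetric matrix equals the sum of its eigenvalues. -/
lemma trace_eq_sum_eigenvalues' {k : ℕ} {A : Matrix (Fin k) (Fin k) ℝ}
    (hA : A.IsHermitian) : A.trace = ∑ i, hA.eigenvalues i := by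
  simpa using hA.trace_eq_sum_eigenvalues

/-- Lemma 1 of the paper. Let `X̃` be a real `n × m` matrix with
`n ≥ 1`, let `λ > 0`, let `s i` be the eigenvalues of `X̃ᵀ * X̃` (counted with
multiplicity), and let `s̄ = tr(X̃ᵀX̃)/(n·m)` be the mean of the eigenvalues of
`X̃ᵀX̃/n`. Then the effective dimension `ρ = ∑ i, s i / (s i + λ)` satisfies
`ρ ≤ m · s̄ / (s̄ + λ/n)`. -/
theorem effective_dimension_le_upper_bound
    (n m : ℕ) (hn : 1 ≤ n) (X : Matrix (Fin n) (Fin m) ℝ) (lam : ℝ) (hlam : 0 < lam)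
    (hs : (Xᵀ * X).IsHermitian) :
    (∑ i, hs.eigenvalues i / (hs.eigenvalues i + lam)) ≤
      (m : ℝ) * ((Xᵀ * X).trace / (n * m)) /
        ((Xᵀ * X).trace / (n * m) + lam / n) := by
  have hN : (0:ℝ) < n := by exact_mod_cast hn
  -- eigenvalues are nonnegative
  have hpsd : (Xᵀ * X).PosSemidef := by
    have := Matrix.posSemidef_conjTranspose_mul_self X
    simpa using this
  set a : Fin m → ℝ := hs.eigenvalues with ha
  have hapos : ∀ i, 0 ≤ a i := fun i => hpsd.eigenvalues_nonneg i
  have hbpos : ∀ i, 0 < a i + lam := fun i => by linarith [hapos i]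
  have htr : (Xᵀ * X).trace = ∑ i, a i := trace_eq_sum_eigenvalues' hs
  set S : ℝ := ∑ i, a i with hS
  have hSnn : 0 ≤ S := Finset.sum_nonneg fun i _ => hapos i
  rw [htr]
  rcases Nat.eq_zero_or_pos m with hm | hm
  · subst hm
    simp [hS]
  have hM : (0:ℝ) < m := by exact_mod_cast hm
  -- simplify RHS to m*S/(S + m*lam)
  have hrhs : (m : ℝ) * (S / (n * m)) / (S / (n * m) + lam / n)
      = (m : ℝ) * S / (S + m * lam) := by
    field_simp
  rw [hrhs]
  -- reduce to Cauchy–Schwarz / Sedrakyan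
  have key : (m : ℝ)^2 / (S + m * lam) ≤ ∑ i, 1 / (a i + lam) := by
    have := Finset.sq_sum_div_le_sum_sq_div (Finset.univ : Finset (Fin m))
      (fun _ => (1:ℝ)) (g := fun i => a i + lam) (fun i _ => hbpos i)
    simpa [Finset.sum_add_distrib, hS, mul_comm] using this
  have hden : (0:ℝ) < S + m * lam := by positivity
  have expand : ∀ i, a i / (a i + lam) = 1 - lam / (a i + lam) := by
    intro i
    rw [eq_sub_iff_add_eq, ← add_div, div_self (hbpos i).ne']
  have expand2 : (m : ℝ) * S / (S + m * lam)
      = m - lam * ((m:ℝ)^2 / (S + m * lam)) := by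
    field_simp
    ring
  calc (∑ i, a i / (a i + lam)) = ∑ i, (1 - lam / (a i + lam)) := by
        simp_rw [expand]
    _ = m - lam * ∑ i, 1 / (a i + lam) := by
        rw [Finset.sum_sub_distrib]
        simp [Finset.mul_sum, div_eq_mul_inv]
    _ ≤ m - lam * ((m:ℝ)^2 / (S + m * lam)) := by
        have := mul_le_mul_of_nonneg_left key hlam.le
        linarith
    _ = (m : ℝ) * S / (S + m * lam) := expand2.symm
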